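/- Let γ ∈ ℝ, s ∈ (0,1), and define ã(v,η) = ⟨v⟩^γ (1 + |η|² + |v∧η|² + |v|²)^s for (v,η) ∈ ℝ³×ℝ³, where v∧η is the cross product and ⟨v⟩ = (1+|v|²)^{1/2}. Then ã is a temperate weight: there exist constants C > 0 and N > 0 such that for all X, Y ∈ ℝ⁶, ã(X)/ã(Y) ≤ C ⟨X−Y⟩^N. -/

import Mathlib

/-- Cross product of two vectors in `ℝ³` (as `EuclideanSpace ℝ (Fin 3)`). -/
noncomputable def cross (v w : EuclideanSpace ℝ (Fin 3)) : EuclideanSpace ℝ (Fin 3) :=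
  WithLp.toLp 2 (fun i => ![v 1 * w 2 - v 2 * w 1, v 2 * w 0 - v 0 * w 2, v 0 * w 1 - v 1 * w 0] i)

/-- The weight `ã(v,η) = ⟨v⟩^γ (1+|η|²+|v∧η|²+|v|²)^s`. -/
noncomputable def atilde (γ s : ℝ) (v η : EuclideanSpace ℝ (Fin 3)) : ℝ :=
  (1 + ‖v‖ ^ 2) ^ (γ / 2) * (1 + ‖η‖ ^ 2 + ‖cross v η‖ ^ 2 + ‖v‖ ^ 2) ^ s

lemma norm_sq_expand (x : EuclideanSpace ℝ (Fin 3)) :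
    ‖x‖ ^ 2 = x 0 ^ 2 + x 1 ^ 2 + x 2 ^ 2 := by
  rw [EuclideanSpace.norm_eq, Real.sq_sqrt (by positivity)]
  simp [Fin.sum_univ_three, sq_abs]

lemma cross_norm_sq (v w : EuclideanSpace ℝ (Fin 3)) :
    ‖cross v w‖ ^ 2 = (v 1 * w 2 - v 2 * w 1) ^ 2 + (v 2 * w 0 - v 0 * w 2) ^ 2
      + (v 0 * w 1 - v 1 * w 0) ^ 2 := by
  rw [norm_sq_expand]
  simp [cross]

lemma cross_norm_le (v w : EuclideanSpace ℝ (Fin 3)) :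
    ‖cross v w‖ ≤ ‖v‖ * ‖w‖ := by
  have h : ‖cross v w‖ ^ 2 ≤ (‖v‖ * ‖w‖) ^ 2 := by
    rw [cross_norm_sq, mul_pow, norm_sq_expand, norm_sq_expand]
    nlinarith [sq_nonneg (v 0 * w 0 + v 1 * w 1 + v 2 * w 2)]
  exact (pow_le_pow_iff_left₀ (norm_nonneg _) (by positivity) (by norm_num)).mp h

lemma cross_expand (v' a η' b : EuclideanSpace ℝ (Fin 3)) :
    cross (v' + a) (η' + b) = cross v' η' + cross v' b + cross a η' + cross a b := by
  ext i
  fin_cases i <;> simp [cross, PiLp.add_apply] <;> ring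

lemma sq_four_bound (x a b c d : ℝ) (hx : 0 ≤ x) (ha : 0 ≤ a) (hb : 0 ≤ b) (hc : 0 ≤ c)
    (hd : 0 ≤ d) (h : x ≤ a + b + c + d) : x ^ 2 ≤ 4 * (a ^ 2 + b ^ 2 + c ^ 2 + d ^ 2) := by
  nlinarith [sq_nonneg (a - b), sq_nonneg (a - c), sq_nonneg (a - d), sq_nonneg (b - c),
    sq_nonneg (b - d), sq_nonneg (c - d)]

lemma key_poly (e w A b1 b2 ps cs vs : ℝ) (he : 0 ≤ e) (hw : 0 ≤ w) (hA : 0 ≤ A)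
    (hb1 : 0 ≤ b1) (hb2 : 0 ≤ b2)
    (hps : ps ≤ 2 * e + 2 * b2) (hcs : cs ≤ 4 * (A + w * b2 + b1 * e + b1 * b2))
    (hvs : vs ≤ 2 * w + 2 * b1) :
    1 + ps + cs + vs ≤ 25 * (1 + e + A + w) * (1 + (b1 + b2)) ^ 2 := by
  nlinarith [mul_nonneg hb1 hb2, mul_nonneg he hb1, mul_nonneg he hb2,
    mul_nonneg hw hb1, mul_nonneg hw hb2, mul_nonneg hA hb1, mul_nonneg hA hb2,
    mul_nonneg (mul_nonneg hb1 hb2) he, mul_nonneg (mul_nonneg hb1 hb2) hw,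
    mul_nonneg (mul_nonneg hb1 hb2) hA, sq_nonneg b1, sq_nonneg b2,
    mul_nonneg he (sq_nonneg b1), mul_nonneg he (sq_nonneg b2),
    mul_nonneg hw (sq_nonneg b1), mul_nonneg hw (sq_nonneg b2),
    mul_nonneg hA (sq_nonneg b1), mul_nonneg hA (sq_nonneg b2)]

lemma peetre_poly (ws vs b1 b2 : ℝ) (hw : 0 ≤ ws) (hb1 : 0 ≤ b1) (hb2 : 0 ≤ b2)
    (h : vs ≤ 2 * ws + 2 * b1) :
    1 + vs ≤ 2 * (1 + (b1 + b2)) * (1 + ws) := by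
  nlinarith [mul_nonneg hb1 hw, mul_nonneg hb2 hw]

set_option maxHeartbeats 1000000

/-- Temperance of the weight `ã`: there are `C, N > 0` with
`ã(X)/ã(Y) ≤ C ⟨X−Y⟩^N` for all `X, Y ∈ ℝ⁶`. -/
theorem atilde_temperate (γ s : ℝ) (hs : s ∈ Set.Ioo (0 : ℝ) 1) :
    ∃ C > (0 : ℝ), ∃ N > (0 : ℝ), ∀ v η v' η' : EuclideanSpace ℝ (Fin 3),
      atilde γ s v η / atilde γ s v' η'
        ≤ C * (1 + (‖v - v'‖ ^ 2 + ‖η - η'‖ ^ 2)) ^ (N / 2) := by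
  obtain ⟨hs0, hs1⟩ := hs
  refine ⟨25 * 2 ^ (|γ| / 2), by positivity, |γ| + 4, by positivity, ?_⟩
  intro v η v' η'
  set D : ℝ := 1 + (‖v - v'‖ ^ 2 + ‖η - η'‖ ^ 2) with hD
  have hD1 : (1 : ℝ) ≤ D := by
    rw [hD]; nlinarith [sq_nonneg ‖v - v'‖, sq_nonneg ‖η - η'‖]
  have hD0 : (0 : ℝ) < D := lt_of_lt_of_le one_pos hD1
  -- cross product bound
  have hcross : ‖cross v η‖ ≤ ‖cross v' η'‖ + ‖v'‖ * ‖η - η'‖ + ‖v - v'‖ * ‖η'‖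
      + ‖v - v'‖ * ‖η - η'‖ := by
    have hv : v = v' + (v - v') := by abel
    have hη : η = η' + (η - η') := by abel
    calc ‖cross v η‖ = ‖cross v' η' + cross v' (η - η') + cross (v - v') η'
          + cross (v - v') (η - η')‖ := by rw [← cross_expand, ← hv, ← hη]
      _ ≤ ‖cross v' η'‖ + ‖cross v' (η - η')‖ + ‖cross (v - v') η'‖
          + ‖cross (v - v') (η - η')‖ :=
            norm_add_le_of_le (norm_add_le_of_le (norm_add_le _ _) le_rfl) le_rfl
      _ ≤ _ := by gcongr <;> exact cross_norm_le _ _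
  set PX : ℝ := 1 + ‖η‖ ^ 2 + ‖cross v η‖ ^ 2 + ‖v‖ ^ 2 with hPX
  set PY : ℝ := 1 + ‖η'‖ ^ 2 + ‖cross v' η'‖ ^ 2 + ‖v'‖ ^ 2 with hPY
  have hPY0 : (0 : ℝ) < PY := by rw [hPY]; positivity
  have hPX0 : (0 : ℝ) < PX := by rw [hPX]; positivity
  have hvle : ‖v‖ ≤ ‖v'‖ + ‖v - v'‖ := by simpa using norm_add_le v' (v - v')
  have hv2 : ‖v‖ ^ 2 ≤ 2 * ‖v'‖ ^ 2 + 2 * ‖v - v'‖ ^ 2 := by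
    nlinarith [norm_nonneg v, norm_nonneg v', norm_nonneg (v - v'),
      sq_nonneg (‖v'‖ - ‖v - v'‖)]
  have hηle : ‖η‖ ≤ ‖η'‖ + ‖η - η'‖ := by simpa using norm_add_le η' (η - η')
  have hη2 : ‖η‖ ^ 2 ≤ 2 * ‖η'‖ ^ 2 + 2 * ‖η - η'‖ ^ 2 := by
    nlinarith [norm_nonneg η, norm_nonneg η', norm_nonneg (η - η'),
      sq_nonneg (‖η'‖ - ‖η - η'‖)]
  have hc2 : ‖cross v η‖ ^ 2 ≤ 4 * (‖cross v' η'‖ ^ 2 + ‖v'‖ ^ 2 * ‖η - η'‖ ^ 2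
      + ‖v - v'‖ ^ 2 * ‖η'‖ ^ 2 + ‖v - v'‖ ^ 2 * ‖η - η'‖ ^ 2) := by
    have := sq_four_bound ‖cross v η‖ ‖cross v' η'‖ (‖v'‖ * ‖η - η'‖) (‖v - v'‖ * ‖η'‖)
      (‖v - v'‖ * ‖η - η'‖) (norm_nonneg _) (norm_nonneg _)
      (by positivity) (by positivity) (by positivity) hcross
    calc ‖cross v η‖ ^ 2 ≤ 4 * (‖cross v' η'‖ ^ 2 + (‖v'‖ * ‖η - η'‖) ^ 2
          + (‖v - v'‖ * ‖η'‖) ^ 2 + (‖v - v'‖ * ‖η - η'‖) ^ 2) := this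
      _ = _ := by ring
  have hP : PX ≤ 25 * PY * D ^ 2 := by
    rw [hPX, hPY, hD]
    have := key_poly (‖η'‖ ^ 2) (‖v'‖ ^ 2) (‖cross v' η'‖ ^ 2) (‖v - v'‖ ^ 2) (‖η - η'‖ ^ 2)
      (‖η‖ ^ 2) (‖cross v η‖ ^ 2) (‖v‖ ^ 2)
      (sq_nonneg _) (sq_nonneg _) (sq_nonneg _) (sq_nonneg _) (sq_nonneg _)
      (by linarith) (by linarith [hc2]) (by linarith)
    linarith [this]
  -- rpow bound: PX^s ≤ 25 PY^s D^2
  have hPs : PX ^ s ≤ 25 * PY ^ s * D ^ (2 : ℝ) := by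
    calc PX ^ s ≤ (25 * PY * D ^ 2) ^ s := Real.rpow_le_rpow hPX0.le hP hs0.le
      _ = 25 ^ s * PY ^ s * (D ^ 2) ^ s := by
          rw [Real.mul_rpow (by positivity) (by positivity),
            Real.mul_rpow (by positivity) hPY0.le]
      _ ≤ 25 * PY ^ s * D ^ (2 : ℝ) := by
          have h25 : (25 : ℝ) ^ s ≤ 25 := by
            calc (25 : ℝ) ^ s ≤ 25 ^ (1 : ℝ) :=
              Real.rpow_le_rpow_of_exponent_le (by norm_num) hs1.le
            _ = 25 := Real.rpow_one _
          have hDs : ((D : ℝ) ^ 2) ^ s ≤ D ^ (2 : ℝ) := by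
            rw [← Real.rpow_natCast D 2, ← Real.rpow_mul hD0.le]
            exact Real.rpow_le_rpow_of_exponent_le hD1 (by push_cast; nlinarith)
          calc (25:ℝ) ^ s * PY ^ s * (D ^ 2) ^ s ≤ 25 * PY ^ s * (D ^ 2) ^ s := by
                have : (0:ℝ) ≤ PY ^ s := by positivity
                have : (0:ℝ) ≤ (D ^ 2 : ℝ) ^ s := by positivity
                gcongr
            _ ≤ 25 * PY ^ s * D ^ (2:ℝ) := by
                have : (0:ℝ) ≤ PY ^ s := by positivity
                gcongr
  -- gamma part
  have hGv : (0 : ℝ) < 1 + ‖v‖ ^ 2 := by positivity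
  have hGv' : (0 : ℝ) < 1 + ‖v'‖ ^ 2 := by positivity
  have hpe1 : 1 + ‖v‖ ^ 2 ≤ 2 * D * (1 + ‖v'‖ ^ 2) := by
    rw [hD]
    exact peetre_poly (‖v'‖ ^ 2) (‖v‖ ^ 2) (‖v - v'‖ ^ 2) (‖η - η'‖ ^ 2)
      (sq_nonneg _) (sq_nonneg _) (sq_nonneg _) hv2
  have hpe2 : 1 + ‖v'‖ ^ 2 ≤ 2 * D * (1 + ‖v‖ ^ 2) := by
    have hv'le : ‖v'‖ ≤ ‖v‖ + ‖v - v'‖ := by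
      have := norm_sub_le v (v - v')
      simpa [sub_sub_cancel] using this
    have hv'2 : ‖v'‖ ^ 2 ≤ 2 * ‖v‖ ^ 2 + 2 * ‖v - v'‖ ^ 2 := by
      nlinarith [norm_nonneg v', norm_nonneg v, norm_nonneg (v - v'),
        sq_nonneg (‖v‖ - ‖v - v'‖)]
    rw [hD]
    exact peetre_poly (‖v‖ ^ 2) (‖v'‖ ^ 2) (‖v - v'‖ ^ 2) (‖η - η'‖ ^ 2)
      (sq_nonneg _) (sq_nonneg _) (sq_nonneg _) hv'2
  have hG : (1 + ‖v‖ ^ 2) ^ (γ / 2)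
      ≤ 2 ^ (|γ| / 2) * D ^ (|γ| / 2) * (1 + ‖v'‖ ^ 2) ^ (γ / 2) := by
    rcases le_or_gt 0 γ with hγ | hγ
    · rw [abs_of_nonneg hγ]
      calc (1 + ‖v‖ ^ 2) ^ (γ / 2) ≤ (2 * D * (1 + ‖v'‖ ^ 2)) ^ (γ / 2) :=
            Real.rpow_le_rpow hGv.le hpe1 (by linarith)
        _ = 2 ^ (γ / 2) * D ^ (γ / 2) * (1 + ‖v'‖ ^ 2) ^ (γ / 2) := by
            rw [Real.mul_rpow (by positivity) hGv'.le,
              Real.mul_rpow (by norm_num) hD0.le]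
    · rw [abs_of_neg hγ]
      have key : (1 + ‖v'‖ ^ 2) ^ (-γ / 2)
          ≤ 2 ^ (-γ / 2) * D ^ (-γ / 2) * (1 + ‖v‖ ^ 2) ^ (-γ / 2) := by
        calc (1 + ‖v'‖ ^ 2) ^ (-γ / 2) ≤ (2 * D * (1 + ‖v‖ ^ 2)) ^ (-γ / 2) :=
              Real.rpow_le_rpow hGv'.le hpe2 (by linarith)
          _ = 2 ^ (-γ / 2) * D ^ (-γ / 2) * (1 + ‖v‖ ^ 2) ^ (-γ / 2) := by
              rw [Real.mul_rpow (by positivity) hGv.le,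
                Real.mul_rpow (by norm_num) hD0.le]
      have h1 : (0:ℝ) < (1 + ‖v‖ ^ 2) ^ (-γ / 2) := Real.rpow_pos_of_pos hGv _
      have h2 : (0:ℝ) < (1 + ‖v'‖ ^ 2) ^ (-γ / 2) := Real.rpow_pos_of_pos hGv' _
      have e1 : (1 + ‖v‖ ^ 2) ^ (γ / 2) = ((1 + ‖v‖ ^ 2) ^ (-γ / 2))⁻¹ := by
        rw [← Real.rpow_neg hGv.le]; ring_nf
      have e2 : (1 + ‖v'‖ ^ 2) ^ (γ / 2) = ((1 + ‖v'‖ ^ 2) ^ (-γ / 2))⁻¹ := by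
        rw [← Real.rpow_neg hGv'.le]; ring_nf
      rw [e1, e2]
      rw [inv_le_iff_one_le_mul₀ h1]
      calc (1:ℝ) = (1 + ‖v'‖ ^ 2) ^ (-γ / 2) * ((1 + ‖v'‖ ^ 2) ^ (-γ / 2))⁻¹ := by
            field_simp
        _ ≤ (2 ^ (-γ / 2) * D ^ (-γ / 2) * (1 + ‖v‖ ^ 2) ^ (-γ / 2)) *
              ((1 + ‖v'‖ ^ 2) ^ (-γ / 2))⁻¹ := by gcongr
        _ = 2 ^ (-γ / 2) * D ^ (-γ / 2) * ((1 + ‖v'‖ ^ 2) ^ (-γ / 2))⁻¹ *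
              (1 + ‖v‖ ^ 2) ^ (-γ / 2) := by ring
  -- conclude
  have hat' : 0 < atilde γ s v' η' :=
    mul_pos (Real.rpow_pos_of_pos hGv' _) (Real.rpow_pos_of_pos hPY0 _)
  rw [div_le_iff₀ hat']
  show (1 + ‖v‖ ^ 2) ^ (γ / 2) * PX ^ s
      ≤ 25 * 2 ^ (|γ| / 2) * D ^ ((|γ| + 4) / 2) * ((1 + ‖v'‖ ^ 2) ^ (γ / 2) * PY ^ s)
  have hDN : D ^ ((|γ| + 4) / 2) = D ^ (|γ| / 2) * D ^ (2:ℝ) := by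
    rw [← Real.rpow_add hD0]; ring_nf
  have hgoal : (1 + ‖v‖ ^ 2) ^ (γ / 2) * PX ^ s
      ≤ (2 ^ (|γ| / 2) * D ^ (|γ| / 2) * (1 + ‖v'‖ ^ 2) ^ (γ / 2))
        * (25 * PY ^ s * D ^ (2:ℝ)) := by
    have hB : (0:ℝ) ≤ PX ^ s := by positivity
    have hC : (0:ℝ) ≤ 2 ^ (|γ| / 2) * D ^ (|γ| / 2) * (1 + ‖v'‖ ^ 2) ^ (γ / 2) := by
      have := Real.rpow_pos_of_pos hGv' (γ / 2)
      have := Real.rpow_pos_of_pos hD0 (|γ| / 2)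
      positivity
    exact mul_le_mul hG hPs hB hC
  calc (1 + ‖v‖ ^ 2) ^ (γ / 2) * PX ^ s
      ≤ (2 ^ (|γ| / 2) * D ^ (|γ| / 2) * (1 + ‖v'‖ ^ 2) ^ (γ / 2))
        * (25 * PY ^ s * D ^ (2:ℝ)) := hgoal
    _ = 25 * 2 ^ (|γ| / 2) * (D ^ (|γ| / 2) * D ^ (2:ℝ)) *
          ((1 + ‖v'‖ ^ 2) ^ (γ / 2) * PY ^ s) := by ring
    _ = _ := by rw [hDN]
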